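/- Let X⋆ ∈ ℝ^{I₁×I₂×I₃} have tubal rank R with skinny t-SVD X⋆ = U⋆*Σ⋆*V⋆ᵀ. For any L ∈ ℝ^{I₁×R×I₃} and R ∈ ℝ^{I₂×R×I₃}, if dist(L,R;L⋆,R⋆) ≤ (ε/√I₃)·σ_min(X⋆) for some 0 < ε < 1, then the infimum defining dist(L,R;L⋆,R⋆) is attained at some Q ∈ GL(R); that is, an invertible optimal alignment tensor between (L,R) and (L⋆,R⋆) exists. -/

import Mathlib

open scoped BigOperators
open Matrix

/-- An order-3 real tensor. -/
abbrev Tensor (I₁ I₂ I₃ : ℕ) := Fin I₁ → Fin I₂ → Fin I₃ → ℝ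

namespace RTPCA

variable {I₁ I₂ I₃ J R : ℕ}

/-- The t-product, computed by circular convolution along the third mode
(equivalently, slice-wise products in the Fourier domain). -/
noncomputable def tprod (A : Tensor I₁ I₂ I₃) (B : Tensor I₂ J I₃) : Tensor I₁ J I₃ :=
  fun i j k => ∑ l : Fin I₂, ∑ t : Fin I₃, A i l t * B l j (k - t)

/-- The tensor transpose: transpose each frontal slice and reverse the order
of the frontal slices 2 through I₃. -/
def tT (A : Tensor I₁ I₂ I₃) : Tensor I₂ I₁ I₃ :=
  fun j i k => A i j (-k)

/-- The identity tensor: first frontal slice is the identity, the rest are zero. -/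
def idT (R I₃ : ℕ) : Tensor R R I₃ :=
  fun i j k => if i = j ∧ (k : ℕ) = 0 then 1 else 0

/-- Discrete Fourier transform along the third mode. -/
noncomputable def dft (A : Tensor I₁ I₂ I₃) (i : Fin I₁) (j : Fin I₂) (k : Fin I₃) : ℂ :=
  ∑ t : Fin I₃, (A i j t : ℂ) *
    Complex.exp (-(2 * Real.pi * Complex.I * (k.val : ℂ) * (t.val : ℂ)) / (I₃ : ℂ))

/-- Fourier-domain frontal slice. -/
noncomputable def fSlice (A : Tensor I₁ I₂ I₃) (k : Fin I₃) : Matrix (Fin I₁) (Fin I₂) ℂ :=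
  Matrix.of fun i j => dft A i j k

/-- Inverse DFT along the third mode (real part). -/
noncomputable def invDft (F : Fin I₁ → Fin I₂ → Fin I₃ → ℂ) : Tensor I₁ I₂ I₃ :=
  fun i j t =>
    ((∑ k : Fin I₃, F i j k *
      Complex.exp ((2 * Real.pi * Complex.I * (k.val : ℂ) * (t.val : ℂ)) / (I₃ : ℂ))) / (I₃ : ℂ)).re

/-- Squared Frobenius norm. -/
noncomputable def fro2 (A : Tensor I₁ I₂ I₃) : ℝ := ∑ i, ∑ j, ∑ k, (A i j k) ^ 2

/-- Frobenius norm. -/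
noncomputable def froNorm (A : Tensor I₁ I₂ I₃) : ℝ := Real.sqrt (fro2 A)

/-- Entrywise sup norm ‖A‖_∞. -/
noncomputable def infNorm (A : Tensor I₁ I₂ I₃) : ℝ := ⨆ i, ⨆ j, ⨆ k, |A i j k|

/-- ℓ_{2,∞} norm: largest ℓ₂ norm of a horizontal slice. -/
noncomputable def twoInfNorm (A : Tensor I₁ I₂ I₃) : ℝ :=
  ⨆ i, Real.sqrt (∑ j, ∑ k, (A i j k) ^ 2)

/-- ℓ_{1,∞} norm: largest ℓ₁ norm of a horizontal slice. -/
noncomputable def oneInfNorm (A : Tensor I₁ I₂ I₃) : ℝ := ⨆ i, ∑ j, ∑ k, |A i j k|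

/-- Spectral norm (largest singular value) of a complex matrix. -/
noncomputable def matSpecNorm {m n : ℕ} (M : Matrix (Fin m) (Fin n) ℂ) : ℝ :=
  ‖LinearMap.toContinuousLinearMap (Matrix.toEuclideanLin M)‖

/-- Tensor spectral norm = tensor operator norm: the largest singular value of
the Fourier-domain frontal slices. -/
noncomputable def specNorm (A : Tensor I₁ I₂ I₃) : ℝ :=
  ⨆ k : Fin I₃, matSpecNorm (fSlice A k)

/-- f-diagonal in the Fourier domain with strictly positive diagonal entries. -/
def FDiagPos (S : Tensor R R I₃) : Prop :=
  (∀ k, ∀ i j : Fin R, i ≠ j → fSlice S k i j = 0) ∧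
  (∀ k, ∀ i : Fin R, 0 < (fSlice S k i i).re ∧ (fSlice S k i i).im = 0)

/-- f-diagonal in the Fourier domain with nonnegative diagonal entries. -/
def FDiagNonneg (S : Tensor R R I₃) : Prop :=
  (∀ k, ∀ i j : Fin R, i ≠ j → fSlice S k i j = 0) ∧
  (∀ k, ∀ i : Fin R, 0 ≤ (fSlice S k i i).re ∧ (fSlice S k i i).im = 0)

/-- Skinny t-SVD with tubal rank R (strictly positive Fourier-domain diagonal). -/
structure IsSkinnyTSVD (X : Tensor I₁ I₂ I₃) (U : Tensor I₁ R I₃)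
    (S : Tensor R R I₃) (V : Tensor I₂ R I₃) : Prop where
  decomp : X = tprod (tprod U S) (tT V)
  orthU : tprod (tT U) U = idT R I₃
  orthV : tprod (tT V) V = idT R I₃
  diag : FDiagPos S

/-- Skinny t-SVD with tubal rank at most R (nonnegative diagonal allowed). -/
structure IsSkinnyTSVDLe (X : Tensor I₁ I₂ I₃) (U : Tensor I₁ R I₃)
    (S : Tensor R R I₃) (V : Tensor I₂ R I₃) : Prop where
  decomp : X = tprod (tprod U S) (tT V)
  orthU : tprod (tT U) U = idT R I₃
  orthV : tprod (tT V) V = idT R I₃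
  diag : FDiagNonneg S

/-- σ_min: the smallest Fourier-domain diagonal entry of Σ. -/
noncomputable def sigmaMin (S : Tensor R R I₃) : ℝ :=
  ⨅ k : Fin I₃, ⨅ i : Fin R, (fSlice S k i i).re

/-- σ_max (= σ₁): the largest Fourier-domain diagonal entry of Σ. -/
noncomputable def sigmaMax (S : Tensor R R I₃) : ℝ :=
  ⨆ k : Fin I₃, ⨆ i : Fin R, (fSlice S k i i).re

/-- Condition number κ = σ_max / σ_min. -/
noncomputable def condNum (S : Tensor R R I₃) : ℝ := sigmaMax S / sigmaMin S

/-- Σ^{1/2}: entrywise square roots in the Fourier domain. -/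
noncomputable def sqrtT (S : Tensor R R I₃) : Tensor R R I₃ :=
  invDft fun i j k => (Real.sqrt ((dft S i j k).re) : ℂ)

/-- Σ^{-1/2}: entrywise reciprocal square roots in the Fourier domain. -/
noncomputable def invSqrtT (S : Tensor R R I₃) : Tensor R R I₃ :=
  invDft fun i j k => (((Real.sqrt ((dft S i j k).re))⁻¹ : ℝ) : ℂ)

/-- `Qi` is a two-sided t-product inverse of `Q` (i.e. `Q ∈ GL(R)`). -/
def TInv (Q Qi : Tensor R R I₃) : Prop :=
  tprod Q Qi = idT R I₃ ∧ tprod Qi Q = idT R I₃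

/-- Alignment error (the quantity inside the infimum defining `distT`)
for a given invertible Q with inverse Qi. -/
noncomputable def alignErr (L Ls : Tensor I₁ R I₃) (Rt Rs : Tensor I₂ R I₃)
    (Sh : Tensor R R I₃) (Q Qi : Tensor R R I₃) : ℝ :=
  Real.sqrt ((froNorm (tprod (tprod L Q - Ls) Sh)) ^ 2 +
    (froNorm (tprod (tprod Rt (tT Qi) - Rs) Sh)) ^ 2)

/-- The distance metric dist(L,R;L⋆,R⋆): the infimum of alignment errors over
invertible tensors Q, where `Sh` is Σ⋆^{1/2}. -/
noncomputable def distT (L Ls : Tensor I₁ R I₃) (Rt Rs : Tensor I₂ R I₃)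
    (Sh : Tensor R R I₃) : ℝ :=
  sInf {d : ℝ | ∃ Q Qi : Tensor R R I₃, TInv Q Qi ∧ d = alignErr L Ls Rt Rs Sh Q Qi}

/-- Q (with inverse Qi) is an optimal alignment tensor: it attains the infimum
defining the distance metric. -/
def IsOptAlign (L Ls : Tensor I₁ R I₃) (Rt Rs : Tensor I₂ R I₃)
    (Sh : Tensor R R I₃) (Q Qi : Tensor R R I₃) : Prop :=
  TInv Q Qi ∧ alignErr L Ls Rt Rs Sh Q Qi = distT L Ls Rt Rs Sh

/-- Entrywise soft-thresholding. -/
noncomputable def softThresh (ζ : ℝ) (A : Tensor I₁ I₂ I₃) : Tensor I₁ I₂ I₃ :=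
  fun i j k => Real.sign (A i j k) * max 0 (|A i j k| - ζ)

/-- Support: the set of index triples at which the tensor is nonzero. -/
def supp (A : Tensor I₁ I₂ I₃) : Set (Fin I₁ × Fin I₂ × Fin I₃) :=
  {p | A p.1 p.2.1 p.2.2 ≠ 0}

/-- α-sparsity: every horizontal, lateral and frontal slice has at most an
α fraction of nonzero entries. -/
def IsSparse (α : ℝ) (S : Tensor I₁ I₂ I₃) : Prop :=
  (∀ i₁ : Fin I₁, ({p : Fin I₂ × Fin I₃ | S i₁ p.1 p.2 ≠ 0}.ncard : ℝ) ≤ α * I₂ * I₃) ∧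
  (∀ i₂ : Fin I₂, ({p : Fin I₁ × Fin I₃ | S p.1 i₂ p.2 ≠ 0}.ncard : ℝ) ≤ α * I₁ * I₃) ∧
  (∀ i₃ : Fin I₃, ({p : Fin I₁ × Fin I₂ | S p.1 p.2 i₃ ≠ 0}.ncard : ℝ) ≤ α * I₁ * I₂)

/-- Tensor μ-incoherence conditions for the skinny t-SVD factors U, V. -/
def Incoherent (μ : ℝ) (U : Tensor I₁ R I₃) (V : Tensor I₂ R I₃) : Prop :=
  twoInfNorm U ≤ Real.sqrt (μ * R / I₁) ∧ twoInfNorm V ≤ Real.sqrt (μ * R / I₂)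

/-- Top-R truncated t-SVD of A: a skinny t-SVD-shaped factorization which, in
every Fourier-domain frontal slice, keeps R largest singular values together
with their singular vectors (the residual is orthogonal to the kept singular
vectors and its spectral norm is at most every kept singular value). -/
structure IsTruncTSVD (A : Tensor I₁ I₂ I₃) (U : Tensor I₁ R I₃)
    (S : Tensor R R I₃) (V : Tensor I₂ R I₃) : Prop where
  orthU : tprod (tT U) U = idT R I₃
  orthV : tprod (tT V) V = idT R I₃
  diag : FDiagNonneg S
  leftOrth : ∀ k, (fSlice U k)ᴴ * (fSlice A k - fSlice (tprod (tprod U S) (tT V)) k) = 0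
  rightOrth : ∀ k, (fSlice A k - fSlice (tprod (tprod U S) (tT V)) k) * fSlice V k = 0
  topR : ∀ k, ∀ r : Fin R,
    matSpecNorm (fSlice A k - fSlice (tprod (tprod U S) (tT V)) k) ≤ (fSlice S k r r).re

end RTPCA

open RTPCA



open Complex
noncomputable def ch (n : ℕ) (a : ℤ) : ℂ := Complex.exp (2 * Real.pi * Complex.I * a / n)

lemma ch_eq_zpow (n : ℕ) (a : ℤ) : ch n a = Complex.exp (2 * Real.pi * Complex.I / n) ^ a := by
  rw [← Complex.exp_int_mul]
  unfold ch; ring_nf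

lemma ch_add (n : ℕ) (a b : ℤ) : ch n (a + b) = ch n a * ch n b := by
  simp only [ch_eq_zpow]
  exact zpow_add₀ (Complex.exp_ne_zero _) a b

lemma ch_zero (n : ℕ) : ch n 0 = 1 := by simp [ch]

lemma ch_pow_n (n : ℕ) (hn : n ≠ 0) (j : ℤ) : ch n (n * j) = 1 := by
  rw [ch_eq_zpow, _root_.zpow_mul, zpow_natCast, ((Complex.isPrimitiveRoot_exp n hn).pow_eq_one), _root_.one_zpow]

lemma ch_congr (n : ℕ) (hn : n ≠ 0) (a b : ℤ) (h : (a : ZMod n) = b) : ch n a = ch n b := by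
  obtain ⟨j, hj⟩ : (n:ℤ) ∣ (a - b) := by
    rw [← ZMod.intCast_zmod_eq_zero_iff_dvd]
    push_cast
    rw [h, sub_self]
  have : a = b + n * j := by omega
  rw [this, ch_add, ch_pow_n n hn, mul_one]

lemma ch_sum (n : ℕ) (hn : n ≠ 0) (c : ℤ) :
    ∑ t : Fin n, ch n (c * t) = if (n:ℤ) ∣ c then (n:ℂ) else 0 := by
  have hx : ∀ t : Fin n, ch n (c * t) = (ch n c) ^ (t:ℕ) := by
    intro t
    rw [ch_eq_zpow, ch_eq_zpow, _root_.zpow_mul, zpow_natCast]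
  simp only [hx]
  by_cases h : (n:ℤ) ∣ c
  · have : ch n c = 1 := by
      obtain ⟨j, rfl⟩ := h
      exact ch_pow_n n hn j
    simp [this, h]
  · have hch : ch n c ≠ 1 := by
      rw [ch_eq_zpow]
      intro hc
      exact h ((Complex.isPrimitiveRoot_exp n hn).zpow_eq_one_iff_dvd c |>.mp hc)
    rw [Fin.sum_univ_eq_sum_range]
    rw [geom_sum_eq hch]
    have : ch n c ^ n = 1 := by
      have : ch n c ^ n = ch n (c * n) := by
        rw [ch_eq_zpow n c, ch_eq_zpow n (c*n), ← zpow_natCast, ← _root_.zpow_mul]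
      rw [this, mul_comm, ch_pow_n n hn c]
    simp [this, if_neg h]

section DFT
variable {I₁ I₂ I₃ J R : ℕ}
open Complex RTPCA

lemma finval_add {n : ℕ} (x y : Fin n) :
    ((((x+y).val : ℤ)) : ZMod n) = ((x.val : ℤ) : ZMod n) + ((y.val : ℤ) : ZMod n) := by
  rcases Nat.eq_zero_or_pos n with h | h
  · subst h; exact x.elim0
  push_cast [Fin.val_add, ZMod.natCast_mod]
  ring

lemma finval_neg {n : ℕ} (hn : n ≠ 0) (x : Fin n) :
    ((((-x).val : ℤ)) : ZMod n) = -((x.val : ℤ) : ZMod n) := by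
  haveI : NeZero n := ⟨hn⟩
  have h := finval_add (-x) x
  rw [neg_add_cancel] at h
  simp only [Fin.val_zero, Int.cast_zero] at h
  push_cast at h ⊢
  linear_combination -h

lemma tprodApply (A : Tensor I₁ I₂ I₃) (B : Tensor I₂ J I₃) (i : Fin I₁) (j : Fin J) (k : Fin I₃) :
    tprod A B i j k = ∑ l : Fin I₂, ∑ t : Fin I₃, A i l t * B l j (k - t) := rfl

lemma dft_eq_ch (A : Tensor I₁ I₂ I₃) (i : Fin I₁) (j : Fin I₂) (k : Fin I₃) :
    dft A i j k = ∑ t : Fin I₃, (A i j t : ℂ) * ch I₃ (-((k.val : ℤ) * t.val)) := by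
  unfold dft ch
  congr 1; funext t; congr 1
  push_cast
  ring_nf

-- convolution theorem
lemma dft_tprod (hI : I₃ ≠ 0) (A : Tensor I₁ I₂ I₃) (B : Tensor I₂ J I₃)
    (i : Fin I₁) (j : Fin J) (m : Fin I₃) :
    dft (RTPCA.tprod A B) i j m = ∑ l : Fin I₂, dft A i l m * dft B l j m := by
  haveI : NeZero I₃ := ⟨hI⟩
  simp only [dft_eq_ch, tprodApply]
  push_cast
  simp only [Finset.sum_mul_sum, Finset.sum_mul, Finset.mul_sum]
  rw [Finset.sum_comm]
  congr 1; funext l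
  conv_rhs => rw [Finset.sum_comm]
  rw [Finset.sum_comm]
  congr 1; funext s
  rw [← Equiv.sum_comp (Equiv.addRight s)
    (fun t => ((A i l s : ℂ) * (B l j (t - s) : ℂ)) * ch I₃ (-((m.val : ℤ) * t.val)))]
  congr 1; funext u
  simp only [Equiv.coe_addRight, add_sub_cancel_right]
  have hc : ch I₃ (-((m.val : ℤ) * ((u + s).val))) =
      ch I₃ (-((m.val : ℤ) * s.val)) * ch I₃ (-((m.val : ℤ) * u.val)) := by
    rw [← ch_add]
    apply ch_congr I₃ hI
    have h2 := finval_add u s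
    push_cast at h2 ⊢
    linear_combination (-(m.val : ZMod I₃)) * h2
  rw [hc]; ring

end DFT

section DFT2
variable {I₁ I₂ I₃ J R : ℕ}
open Complex RTPCA

lemma ch_conj (n : ℕ) (a : ℤ) : (starRingEnd ℂ) (ch n a) = ch n (-a) := by
  unfold ch
  rw [← Complex.exp_conj]
  congr 1
  simp [map_div₀, _root_.map_mul, Complex.conj_I, map_ofNat, Complex.conj_ofReal]

lemma abs_ch (n : ℕ) (a : ℤ) : Norm.norm (ch n a) = 1 := by
  unfold ch
  rw [Complex.norm_exp]
  have : (2 * (Real.pi:ℂ) * Complex.I * a / n) = ((2 * Real.pi * a / n : ℝ) : ℂ) * Complex.I := by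
    push_cast; ring
  rw [this, Complex.re_ofReal_mul, Complex.I_re]
  simp

lemma dft_tT (hn : I₃ ≠ 0) (A : Tensor I₁ I₂ I₃) (j : Fin I₂) (i : Fin I₁) (m : Fin I₃) :
    dft (tT A) j i m = (starRingEnd ℂ) (dft A i j m) := by
  haveI : NeZero I₃ := ⟨hn⟩
  simp only [dft_eq_ch, tT, map_sum, _root_.map_mul, Complex.conj_ofReal, ch_conj]
  rw [← Equiv.sum_comp (Equiv.neg (Fin I₃))
    (fun t => ((A i j (-t) : ℝ) : ℂ) * ch I₃ (-((m.val : ℤ) * t.val)))]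
  congr 1; funext t
  simp only [Equiv.neg_apply, neg_neg]
  congr 1
  apply ch_congr I₃ hn
  have h := finval_neg hn t
  push_cast at h ⊢
  linear_combination (-(m.val : ZMod I₃)) * h

lemma dft_idT (hn : I₃ ≠ 0) (i j : Fin R) (m : Fin I₃) :
    dft (idT R I₃) i j m = if i = j then 1 else 0 := by
  haveI : NeZero I₃ := ⟨hn⟩
  simp only [dft_eq_ch, idT]
  rcases eq_or_ne i j with rfl | h
  · rw [Finset.sum_eq_single (0 : Fin I₃)]
    · simp [ch_zero]
    · intro t _ ht
      have : ¬ ((t : ℕ) = 0) := fun hv => ht (Fin.ext hv)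
      simp [this]
    · simp
  · simp [h]

lemma dft_sub (A B : Tensor I₁ I₂ I₃) (i : Fin I₁) (j : Fin I₂) (m : Fin I₃) :
    dft (A - B) i j m = dft A i j m - dft B i j m := by
  simp only [dft, Pi.sub_apply]
  rw [← Finset.sum_sub_distrib]
  congr 1; funext t
  push_cast
  ring

-- orthogonality collapse
lemma ch_inner (hn : I₃ ≠ 0) (m k : Fin I₃) :
    ∑ t : Fin I₃, ch I₃ ((m.val : ℤ) * t.val) * ch I₃ (-((k.val : ℤ) * t.val))
      = if m = k then (I₃ : ℂ) else 0 := by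
  have : ∀ t : Fin I₃, ch I₃ ((m.val : ℤ) * t.val) * ch I₃ (-((k.val : ℤ) * t.val))
      = ch I₃ (((m.val : ℤ) - k.val) * t.val) := by
    intro t
    rw [← ch_add]
    congr 1
    ring
  simp only [this]
  rw [ch_sum I₃ hn]
  have hdvd : ((I₃:ℤ) ∣ ((m.val : ℤ) - k.val)) ↔ m = k := by
    constructor
    · intro h
      by_contra hne
      have hne' : ((m.val : ℤ) - k.val) ≠ 0 := by
        intro h0
        exact hne (Fin.ext (by omega))
      have h1 := Int.le_of_dvd (abs_pos.mpr hne') ((dvd_abs _ _).mpr h)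
      have hm := m.isLt; have hk := k.isLt
      rcases abs_cases ((m.val : ℤ) - k.val) with ⟨he, _⟩ | ⟨he, _⟩ <;> omega
    · rintro rfl; simp
  simp only [hdvd]

lemma inv_formula (hn : I₃ ≠ 0) (A : Tensor I₁ I₂ I₃) (i : Fin I₁) (j : Fin I₂) (t : Fin I₃) :
    (I₃ : ℂ) * (A i j t : ℂ) = ∑ m : Fin I₃, dft A i j m * ch I₃ ((m.val : ℤ) * t.val) := by
  simp only [dft_eq_ch, Finset.sum_mul]
  rw [Finset.sum_comm]
  have : ∀ s : Fin I₃, ∑ m : Fin I₃, (A i j s : ℂ) * ch I₃ (-((m.val:ℤ) * s.val)) * ch I₃ ((m.val:ℤ) * t.val)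
      = (A i j s : ℂ) * (if t = s then (I₃:ℂ) else 0) := by
    intro s
    rw [← ch_inner hn t s, Finset.mul_sum]
    exact Finset.sum_congr rfl fun m _ => by ring
  simp only [this]
  simp only [mul_ite, mul_zero, Finset.sum_ite_eq, Finset.mem_univ, if_true]
  ring

lemma entry_le_sum_dft (hn : I₃ ≠ 0) (A : Tensor I₁ I₂ I₃) (i : Fin I₁) (j : Fin I₂) (t : Fin I₃) :
    (I₃ : ℝ) * |A i j t| ≤ ∑ m : Fin I₃, Norm.norm (dft A i j m) := by
  have h := inv_formula hn A i j t
  have habs : (I₃ : ℝ) * |A i j t| = Norm.norm ((I₃ : ℂ) * (A i j t : ℂ)) := by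
    rw [norm_mul]
    simp [Complex.norm_real]
  rw [habs, h]
  refine le_trans (norm_sum_le _ _) ?_
  apply le_of_eq
  exact Finset.sum_congr rfl fun m _ => by rw [norm_mul, abs_ch, mul_one]

lemma dft_sq_le (A : Tensor I₁ I₂ I₃) (i : Fin I₁) (j : Fin I₂) (m : Fin I₃) :
    Norm.norm (dft A i j m) ^ 2 ≤ (I₃ : ℝ) * ∑ t : Fin I₃, (A i j t) ^ 2 := by
  have h1 : Norm.norm (dft A i j m) ≤ ∑ t : Fin I₃, |A i j t| := by
    rw [dft_eq_ch]
    refine le_trans (norm_sum_le _ _) ?_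
    apply le_of_eq
    exact Finset.sum_congr rfl fun t _ => by
      rw [norm_mul, abs_ch, mul_one, Complex.norm_real, Real.norm_eq_abs]
  have h2 : (∑ t : Fin I₃, |A i j t|) ^ 2 ≤ (I₃ : ℝ) * ∑ t : Fin I₃, (A i j t) ^ 2 := by
    have := Finset.sum_mul_sq_le_sq_mul_sq (Finset.univ) (fun _ : Fin I₃ => (1:ℝ))
      (fun t => |A i j t|)
    simp only [one_mul, one_pow, Finset.sum_const, Finset.card_univ, Fintype.card_fin,
      nsmul_eq_mul, mul_one] at this
    simpa [sq_abs] using this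
  calc Norm.norm (dft A i j m) ^ 2 ≤ (∑ t : Fin I₃, |A i j t|) ^ 2 := by
        apply pow_le_pow_left₀ (norm_nonneg _) h1
      _ ≤ _ := h2

end DFT2

section DFT3
variable {I₁ I₂ I₃ J R : ℕ}
open Complex RTPCA

lemma ch_eq_exp' (n : ℕ) (m t : Fin n) :
    Complex.exp ((2 * Real.pi * Complex.I * (m.val : ℂ) * (t.val : ℂ)) / (n : ℂ))
      = ch n ((m.val : ℤ) * t.val) := by
  unfold ch
  congr 1
  push_cast
  ring

lemma dft_neg_conj (hn : I₃ ≠ 0) (A : Tensor I₁ I₂ I₃) (i : Fin I₁) (j : Fin I₂) (m : Fin I₃) :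
    dft A i j (-m) = (starRingEnd ℂ) (dft A i j m) := by
  haveI : NeZero I₃ := ⟨hn⟩
  simp only [dft_eq_ch, map_sum, _root_.map_mul, Complex.conj_ofReal, ch_conj, neg_neg]
  congr 1; funext t
  congr 1
  apply ch_congr I₃ hn
  have h := finval_neg hn m
  push_cast at h ⊢
  linear_combination (-(t.val : ZMod I₃)) * h

lemma dft_invDft (hn : I₃ ≠ 0) (F : Fin I₁ → Fin I₂ → Fin I₃ → ℂ)
    (hF : ∀ i j m, F i j (-m) = (starRingEnd ℂ) (F i j m))
    (i : Fin I₁) (j : Fin I₂) (k : Fin I₃) :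
    dft (invDft F) i j k = F i j k := by
  haveI : NeZero I₃ := ⟨hn⟩
  have hn' : (I₃ : ℂ) ≠ 0 := Nat.cast_ne_zero.mpr hn
  set S : Fin I₃ → ℂ := fun t => ∑ m : Fin I₃, F i j m * ch I₃ ((m.val : ℤ) * t.val) with hS
  have hinv : ∀ t, invDft F i j t = ((S t) / (I₃ : ℂ)).re := by
    intro t
    unfold invDft
    congr 2
    exact Finset.sum_congr rfl fun m _ => by rw [ch_eq_exp']
  have hreal : ∀ t, ((S t / (I₃ : ℂ)).re : ℂ) = S t / (I₃ : ℂ) := by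
    intro t
    rw [Complex.conj_eq_iff_re.mp]
    have : (starRingEnd ℂ) (S t) = S t := by
      rw [hS]
      simp only [map_sum, _root_.map_mul, ch_conj]
      rw [← Equiv.sum_comp (Equiv.neg (Fin I₃))
        (fun m => F i j m * ch I₃ ((m.val : ℤ) * t.val))]
      congr 1; funext m
      simp only [Equiv.neg_apply]
      rw [hF]
      congr 1
      apply ch_congr I₃ hn
      have h := finval_neg hn m
      push_cast at h ⊢
      linear_combination (-(t.val : ZMod I₃)) * h
    rw [map_div₀, this, Complex.conj_natCast]
  rw [dft_eq_ch]
  have : ∀ t : Fin I₃, ((invDft F i j t : ℝ) : ℂ) * ch I₃ (-((k.val:ℤ) * t.val))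
      = (S t / (I₃:ℂ)) * ch I₃ (-((k.val:ℤ) * t.val)) := by
    intro t
    rw [hinv t, hreal t]
  rw [Finset.sum_congr rfl fun t _ => this t]
  have hT : ∑ t : Fin I₃, S t * ch I₃ (-((k.val:ℤ) * t.val)) = (I₃ : ℂ) * F i j k := by
    simp only [hS, Finset.sum_mul]
    rw [Finset.sum_comm]
    have h1 : ∀ m : Fin I₃, ∑ t : Fin I₃, F i j m * ch I₃ ((m.val:ℤ) * t.val) * ch I₃ (-((k.val:ℤ) * t.val))
        = F i j m * (if m = k then (I₃:ℂ) else 0) := by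
      intro m
      rw [← ch_inner hn m k, Finset.mul_sum]
      exact Finset.sum_congr rfl fun t _ => by ring
    rw [Finset.sum_congr rfl fun m _ => h1 m]
    simp only [mul_ite, mul_zero, Finset.sum_ite_eq', Finset.mem_univ, if_true]
    ring
  calc ∑ t : Fin I₃, S t / (I₃:ℂ) * ch I₃ (-((k.val:ℤ) * t.val))
      = (∑ t : Fin I₃, S t * ch I₃ (-((k.val:ℤ) * t.val))) / (I₃:ℂ) := by
        rw [Finset.sum_div]
        exact Finset.sum_congr rfl fun t _ => by ring
    _ = F i j k := by rw [hT]; field_simp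

lemma dft_sqrtT (hn : I₃ ≠ 0) (S : Tensor R R I₃) (i j : Fin R) (m : Fin I₃) :
    dft (sqrtT S) i j m = (Real.sqrt ((dft S i j m).re) : ℂ) := by
  unfold sqrtT
  rw [dft_invDft hn]
  intro i j m
  rw [dft_neg_conj hn, Complex.conj_ofReal]
  norm_num

end DFT3

section VEC
open Complex Matrix

noncomputable def vn {p : ℕ} (v : Fin p → ℂ) : ℝ := Real.sqrt (∑ i, Complex.normSq (v i))

noncomputable def frobM {p q : ℕ} (M : Matrix (Fin p) (Fin q) ℂ) : ℝ :=
  Real.sqrt (∑ i, ∑ j, Complex.normSq (M i j))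

lemma vn_nonneg {p : ℕ} (v : Fin p → ℂ) : 0 ≤ vn v := Real.sqrt_nonneg _

lemma vn_sq {p : ℕ} (v : Fin p → ℂ) : vn v ^ 2 = ∑ i, Complex.normSq (v i) := by
  rw [vn, Real.sq_sqrt]
  exact Finset.sum_nonneg fun i _ => Complex.normSq_nonneg _

lemma vn_eq_norm {p : ℕ} (v : Fin p → ℂ) :
    vn v = ‖(WithLp.equiv 2 (Fin p → ℂ)).symm v‖ := by
  rw [EuclideanSpace.norm_eq, vn]
  congr 1
  exact Finset.sum_congr rfl fun i _ => by
    rw [← Complex.sq_norm]; rfl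

lemma vn_add_le {p : ℕ} (u v : Fin p → ℂ) : vn (u + v) ≤ vn u + vn v := by
  simp only [vn_eq_norm]
  exact norm_add_le _ _

lemma entry_le_vn {p : ℕ} (v : Fin p → ℂ) (i : Fin p) : Norm.norm (v i) ≤ vn v := by
  rw [← Real.sqrt_sq (norm_nonneg _), vn, Complex.sq_norm]
  apply Real.sqrt_le_sqrt
  exact Finset.single_le_sum (fun j _ => Complex.normSq_nonneg _) (Finset.mem_univ i)

lemma vn_single {p : ℕ} (j : Fin p) : vn (Pi.single j (1:ℂ)) = 1 := by
  rw [vn]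
  rw [Finset.sum_eq_single j]
  · simp
  · intro b _ hb; simp [Pi.single_apply, hb]
  · simp

lemma vn_mulVec_le {p q : ℕ} (M : Matrix (Fin p) (Fin q) ℂ) (x : Fin q → ℂ) :
    vn (M.mulVec x) ≤ frobM M * vn x := by
  have hfx : 0 ≤ frobM M * vn x := mul_nonneg (Real.sqrt_nonneg _) (vn_nonneg _)
  rw [← Real.sqrt_sq hfx, ← Real.sqrt_sq (vn_nonneg (M.mulVec x))]
  apply Real.sqrt_le_sqrt
  rw [vn_sq, mul_pow]
  have hM0 : (0:ℝ) ≤ ∑ i, ∑ j, Complex.normSq (M i j) :=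
    Finset.sum_nonneg fun i _ => Finset.sum_nonneg fun j _ => Complex.normSq_nonneg _
  have hx0 : (0:ℝ) ≤ ∑ i, Complex.normSq (x i) :=
    Finset.sum_nonneg fun i _ => Complex.normSq_nonneg _
  rw [frobM, vn, Real.sq_sqrt hM0, Real.sq_sqrt hx0]
  rw [Finset.sum_mul]
  apply Finset.sum_le_sum
  intro i _
  -- row Cauchy-Schwarz
  have h1 : Norm.norm (M.mulVec x i) ≤ ∑ j, Norm.norm (M i j) * Norm.norm (x j) := by
    rw [Matrix.mulVec, dotProduct]
    refine le_trans (norm_sum_le _ _) ?_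
    exact le_of_eq (Finset.sum_congr rfl fun j _ => norm_mul _ _)
  have h2 : (∑ j, Norm.norm (M i j) * Norm.norm (x j)) ^ 2
      ≤ (∑ j, Complex.normSq (M i j)) * ∑ j, Complex.normSq (x j) := by
    have := Finset.sum_mul_sq_le_sq_mul_sq Finset.univ (fun j => Norm.norm (M i j))
      (fun j => Norm.norm (x j))
    simpa [Complex.sq_norm] using this
  calc Complex.normSq (M.mulVec x i) = Norm.norm (M.mulVec x i) ^ 2 := (Complex.sq_norm _).symm
    _ ≤ (∑ j, Norm.norm (M i j) * Norm.norm (x j)) ^ 2 := by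
        apply pow_le_pow_left₀ (norm_nonneg _) h1
    _ ≤ _ := h2

lemma star_dot_self {p : ℕ} (v : Fin p → ℂ) :
    dotProduct (star v) v = ((∑ i, Complex.normSq (v i) : ℝ) : ℂ) := by
  rw [dotProduct]
  push_cast
  exact Finset.sum_congr rfl fun i _ => by
    simp [Pi.star_apply, Complex.normSq_eq_conj_mul_self]

lemma vn_isometry {p q : ℕ} (M : Matrix (Fin p) (Fin q) ℂ) (hM : Mᴴ * M = 1)
    (y : Fin q → ℂ) : vn (M.mulVec y) = vn y := by
  have key : dotProduct (star (M.mulVec y)) (M.mulVec y) = dotProduct (star y) y := by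
    rw [Matrix.star_mulVec, ← Matrix.dotProduct_mulVec, Matrix.mulVec_mulVec, hM, Matrix.one_mulVec]
  rw [star_dot_self, star_dot_self] at key
  have : (∑ i, Complex.normSq (M.mulVec y i)) = ∑ i, Complex.normSq (y i) :=
    Complex.ofReal_inj.mp key
  rw [vn, vn, this]

lemma diag_mulVec {R : ℕ} (d : Fin R → ℂ) (x : Fin R → ℂ) :
    (Matrix.diagonal d).mulVec x = fun i => d i * x i := by
  funext i
  rw [Matrix.mulVec_diagonal]

lemma normSq_ofReal_mul (a : ℝ) (z : ℂ) : Complex.normSq ((a:ℂ) * z) = a^2 * Complex.normSq z := by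
  rw [Complex.normSq_mul, Complex.normSq_ofReal]
  ring

lemma vn_diag_lower {R : ℕ} (d : Fin R → ℝ) (c : ℝ) (hc : 0 ≤ c) (hd : ∀ i, c ≤ d i)
    (x : Fin R → ℂ) : c * vn x ≤ vn ((Matrix.diagonal (fun i => (d i : ℂ))).mulVec x) := by
  rw [diag_mulVec]
  have h1 : c * vn x = Real.sqrt (c^2 * ∑ i, Complex.normSq (x i)) := by
    rw [Real.sqrt_mul (sq_nonneg c), Real.sqrt_sq hc, vn]
  rw [h1, vn]
  apply Real.sqrt_le_sqrt
  rw [Finset.mul_sum]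
  apply Finset.sum_le_sum
  intro i _
  rw [normSq_ofReal_mul]
  apply mul_le_mul_of_nonneg_right _ (Complex.normSq_nonneg _)
  exact pow_le_pow_left₀ hc (hd i) 2

lemma vn_diag_upper {R : ℕ} (d : Fin R → ℝ) (C : ℝ) (hC : 0 ≤ C)
    (hd0 : ∀ i, 0 ≤ d i) (hd : ∀ i, d i ≤ C)
    (x : Fin R → ℂ) : vn ((Matrix.diagonal (fun i => (d i : ℂ))).mulVec x) ≤ C * vn x := by
  rw [diag_mulVec]
  have h1 : C * vn x = Real.sqrt (C^2 * ∑ i, Complex.normSq (x i)) := by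
    rw [Real.sqrt_mul (sq_nonneg C), Real.sqrt_sq hC, vn]
  rw [h1, vn]
  apply Real.sqrt_le_sqrt
  rw [Finset.mul_sum]
  apply Finset.sum_le_sum
  intro i _
  rw [normSq_ofReal_mul]
  apply mul_le_mul_of_nonneg_right _ (Complex.normSq_nonneg _)
  exact pow_le_pow_left₀ (hd0 i) (hd i) 2

end VEC

section KEY
open Complex Matrix

lemma vn_neg {p : ℕ} (v : Fin p → ℂ) : vn (-v) = vn v := by
  unfold vn
  congr 1
  exact Finset.sum_congr rfl fun i _ => by simp

lemma vn_sub_lower {p : ℕ} (u v : Fin p → ℂ) : vn u - vn v ≤ vn (u + v) := by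
  have h := vn_add_le (u + v) (-v)
  rw [add_neg_cancel_right, vn_neg] at h
  linarith

lemma mulVec_single_col {p q : ℕ} (M : Matrix (Fin p) (Fin q) ℂ) (j : Fin q) (i : Fin p) :
    M.mulVec (Pi.single j 1) i = M i j := by
  rw [Matrix.mulVec, dotProduct]
  rw [Finset.sum_eq_single j]
  · simp
  · intro b _ hb; simp [Pi.single_apply, hb]
  · simp

lemma inv_bound {p R : ℕ} (Wl Uh : Matrix (Fin p) (Fin R) ℂ) (hU : Uhᴴ * Uh = 1)
    (d : Fin R → ℝ) (σm σM : ℝ) (hσm : 0 < σm) (hdlo : ∀ i, σm ≤ d i) (hdhi : ∀ i, d i ≤ σM)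
    (Qm N : Matrix (Fin R) (Fin R) ℂ) (hQN : Qm * N = 1)
    (E : Matrix (Fin p) (Fin R) ℂ) (β : ℝ) (hβ : frobM E ≤ β) (hβσ : β < σm)
    (heq : Wl * Qm * Matrix.diagonal (fun i => ((Real.sqrt (d i)) : ℂ))
      = Uh * Matrix.diagonal (fun i => ((d i) : ℂ)) + E) :
    ∀ i j, Norm.norm (N i j) ≤ Real.sqrt σM * frobM Wl / (σm - β) := by
  intro i j
  set z : Fin R → ℂ := Pi.single j 1 with hz
  set w : Fin R → ℂ := N.mulVec z with hw
  have hd0 : ∀ r, 0 < d r := fun r => lt_of_lt_of_le hσm (hdlo r)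
  set x : Fin R → ℂ := fun r => ((Real.sqrt (d r))⁻¹ : ℂ) * w r with hxdef
  have hsq0 : ∀ r, Real.sqrt (d r) ≠ 0 := fun r =>
    ne_of_gt (Real.sqrt_pos.mpr (hd0 r))
  have hx1 : (Matrix.diagonal (fun r => ((Real.sqrt (d r)) : ℂ))).mulVec x = w := by
    rw [diag_mulVec]
    funext r
    simp only [hxdef]
    have hne : ((Real.sqrt (d r)) : ℂ) ≠ 0 := Complex.ofReal_ne_zero.mpr (hsq0 r)
    rw [← mul_assoc, mul_inv_cancel₀ hne, one_mul]
  have hx2 : Wl.mulVec z = (Wl * Qm * Matrix.diagonal (fun r => ((Real.sqrt (d r)) : ℂ))).mulVec x := by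
    rw [← Matrix.mulVec_mulVec, hx1, hw, Matrix.mulVec_mulVec, Matrix.mul_assoc, hQN, Matrix.mul_one]
  -- lower bound
  have hlow : (σm - β) * vn x ≤ vn (Wl.mulVec z) := by
    rw [hx2, heq, Matrix.add_mulVec]
    have h1 : vn ((Uh * Matrix.diagonal (fun r => ((d r) : ℂ))).mulVec x)
        = vn ((Matrix.diagonal (fun r => ((d r) : ℂ))).mulVec x) := by
      rw [← Matrix.mulVec_mulVec]
      exact vn_isometry Uh hU _
    have h2 : σm * vn x ≤ vn ((Matrix.diagonal (fun r => ((d r) : ℂ))).mulVec x) :=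
      vn_diag_lower d σm hσm.le hdlo x
    have h3 : vn (E.mulVec x) ≤ β * vn x :=
      le_trans (vn_mulVec_le E x) (mul_le_mul_of_nonneg_right hβ (vn_nonneg x))
    have h4 := vn_sub_lower ((Uh * Matrix.diagonal (fun r => ((d r) : ℂ))).mulVec x) (E.mulVec x)
    rw [h1] at h4
    nlinarith [vn_nonneg x]
  have hup : vn (Wl.mulVec z) ≤ frobM Wl := by
    have := vn_mulVec_le Wl z
    rw [hz, vn_single, mul_one] at this
    exact this
  have hwx : vn w ≤ Real.sqrt σM * vn x := by
    rw [← hx1]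
    apply vn_diag_upper (fun r => Real.sqrt (d r)) (Real.sqrt σM) (Real.sqrt_nonneg _)
      (fun r => Real.sqrt_nonneg _) (fun r => Real.sqrt_le_sqrt (hdhi r)) x
  have hxb : vn x ≤ frobM Wl / (σm - β) := by
    rw [le_div_iff₀ (by linarith)]
    calc vn x * (σm - β) = (σm - β) * vn x := by ring
      _ ≤ vn (Wl.mulVec z) := hlow
      _ ≤ frobM Wl := hup
  calc Norm.norm (N i j) = Norm.norm (w i) := by rw [hw, mulVec_single_col]
    _ ≤ vn w := entry_le_vn w i
    _ ≤ Real.sqrt σM * vn x := hwx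
    _ ≤ Real.sqrt σM * (frobM Wl / (σm - β)) :=
        mul_le_mul_of_nonneg_left hxb (Real.sqrt_nonneg _)
    _ = Real.sqrt σM * frobM Wl / (σm - β) := by ring

end KEY

section GLUE
variable {I₁ I₂ I₃ J R : ℕ}
open Complex Matrix RTPCA

lemma fSlice_tprod (hn : I₃ ≠ 0) (A : Tensor I₁ I₂ I₃) (B : Tensor I₂ J I₃) (m : Fin I₃) :
    fSlice (RTPCA.tprod A B) m = fSlice A m * fSlice B m := by
  ext i j
  rw [Matrix.mul_apply]
  exact dft_tprod hn A B i j m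

lemma fSlice_tT (hn : I₃ ≠ 0) (A : Tensor I₁ I₂ I₃) (m : Fin I₃) :
    fSlice (tT A) m = (fSlice A m)ᴴ := by
  ext j i
  rw [Matrix.conjTranspose_apply]
  exact dft_tT hn A j i m

lemma fSlice_idT (hn : I₃ ≠ 0) (m : Fin I₃) :
    fSlice (idT R I₃) m = (1 : Matrix (Fin R) (Fin R) ℂ) := by
  ext i j
  rw [Matrix.one_apply]
  exact dft_idT hn i j m

lemma fSlice_sub (A B : Tensor I₁ I₂ I₃) (m : Fin I₃) :
    fSlice (A - B) m = fSlice A m - fSlice B m := by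
  ext i j
  rw [Matrix.sub_apply]
  exact dft_sub A B i j m

lemma fro2_nonneg (A : Tensor I₁ I₂ I₃) : 0 ≤ fro2 A :=
  Finset.sum_nonneg fun _ _ => Finset.sum_nonneg fun _ _ => Finset.sum_nonneg fun _ _ => sq_nonneg _

lemma froNorm_sq (A : Tensor I₁ I₂ I₃) : froNorm A ^ 2 = fro2 A :=
  Real.sq_sqrt (fro2_nonneg A)

lemma frobM_fSlice_le (hn : I₃ ≠ 0) (A : Tensor I₁ I₂ I₃) (m : Fin I₃) :
    frobM (fSlice A m) ≤ Real.sqrt (I₃ : ℝ) * froNorm A := by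
  rw [froNorm, ← Real.sqrt_mul (by positivity)]
  apply Real.sqrt_le_sqrt
  unfold fro2
  rw [Finset.mul_sum]
  apply Finset.sum_le_sum
  intro i _
  rw [Finset.mul_sum]
  apply Finset.sum_le_sum
  intro j _
  have := dft_sq_le A i j m
  rw [← Complex.sq_norm]
  exact this

-- σ_min and σ_max facts
lemma sigmaMin_le (S : Tensor R R I₃) (m : Fin I₃) (i : Fin R) :
    sigmaMin S ≤ (fSlice S m i i).re := by
  unfold sigmaMin
  have h1 : (⨅ k : Fin I₃, ⨅ r : Fin R, (fSlice S k r r).re) ≤ ⨅ r : Fin R, (fSlice S m r r).re :=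
    ciInf_le (Set.Finite.bddBelow (Set.finite_range _)) m
  have h2 : (⨅ r : Fin R, (fSlice S m r r).re) ≤ (fSlice S m i i).re :=
    ciInf_le (Set.Finite.bddBelow (Set.finite_range _)) i
  exact le_trans h1 h2

lemma le_sigmaMax (S : Tensor R R I₃) (m : Fin I₃) (i : Fin R) :
    (fSlice S m i i).re ≤ sigmaMax S := by
  unfold sigmaMax
  have h1 : (⨆ r : Fin R, (fSlice S m r r).re) ≤ ⨆ k : Fin I₃, ⨆ r : Fin R, (fSlice S k r r).re :=
    le_ciSup (f := fun k : Fin I₃ => ⨆ r : Fin R, (fSlice S k r r).re)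
      (Set.Finite.bddAbove (Set.finite_range _)) m
  have h2 : (fSlice S m i i).re ≤ ⨆ r : Fin R, (fSlice S m r r).re :=
    le_ciSup (f := fun r : Fin R => (fSlice S m r r).re)
      (Set.Finite.bddAbove (Set.finite_range _)) i
  exact le_trans h2 h1

lemma sigmaMin_pos (hn : I₃ ≠ 0) (hR : R ≠ 0) (S : Tensor R R I₃) (hS : FDiagPos S) :
    0 < sigmaMin S := by
  haveI : NeZero I₃ := ⟨hn⟩
  haveI : NeZero R := ⟨hR⟩
  unfold sigmaMin
  obtain ⟨m, hm⟩ := exists_eq_ciInf_of_finite (f := fun k : Fin I₃ => ⨅ i : Fin R, (fSlice S k i i).re)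
  rw [← hm]
  obtain ⟨i, hi⟩ := exists_eq_ciInf_of_finite (f := fun i : Fin R => (fSlice S m i i).re)
  rw [← hi]
  exact (hS.2 m i).1

-- diagonal structure of Σ and Σ^{1/2} slices
lemma fSlice_sig_diag (hn : I₃ ≠ 0) (S : Tensor R R I₃) (hS : FDiagPos S) (m : Fin I₃) :
    fSlice S m = Matrix.diagonal (fun i => (((fSlice S m i i).re : ℝ) : ℂ)) := by
  ext i j
  rcases eq_or_ne i j with rfl | h
  · rw [Matrix.diagonal_apply_eq]
    apply Complex.ext
    · simp
    · simpa using (hS.2 m i).2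
  · rw [Matrix.diagonal_apply_ne _ h]
    exact hS.1 m i j h

lemma fSlice_sqrtT_diag (hn : I₃ ≠ 0) (S : Tensor R R I₃) (hS : FDiagPos S) (m : Fin I₃) :
    fSlice (sqrtT S) m
      = Matrix.diagonal (fun i => ((Real.sqrt ((fSlice S m i i).re) : ℝ) : ℂ)) := by
  ext i j
  rcases eq_or_ne i j with rfl | h
  · rw [Matrix.diagonal_apply_eq]
    exact dft_sqrtT hn S i i m
  · rw [Matrix.diagonal_apply_ne _ h]
    have h0 : dft S i j m = 0 := hS.1 m i j h
    have h1 : fSlice (sqrtT S) m i j = ((Real.sqrt ((dft S i j m).re) : ℝ) : ℂ) :=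
      dft_sqrtT hn S i j m
    rw [h1, h0]
    simp

lemma sqrt_diag_mul_self (hn : I₃ ≠ 0) (S : Tensor R R I₃) (hS : FDiagPos S) (m : Fin I₃) :
    fSlice (sqrtT S) m * fSlice (sqrtT S) m = fSlice S m := by
  have hd : ∀ i, 0 ≤ (fSlice S m i i).re := fun i => (hS.2 m i).1.le
  rw [fSlice_sqrtT_diag hn S hS m]
  conv_rhs => rw [fSlice_sig_diag hn S hS m]
  rw [Matrix.diagonal_mul_diagonal]
  have : (fun i => ((Real.sqrt ((fSlice S m i i).re) : ℝ) : ℂ)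
        * ((Real.sqrt ((fSlice S m i i).re) : ℝ) : ℂ))
      = fun i => (((fSlice S m i i).re : ℝ) : ℂ) :=
    funext fun i => by rw [← Complex.ofReal_mul, Real.mul_self_sqrt (hd i)]
  rw [this]

end GLUE

section APRIORI
open Complex Matrix RTPCA

lemma froNorm_nonneg {I₁ I₂ I₃ : ℕ} (A : Tensor I₁ I₂ I₃) : 0 ≤ froNorm A := Real.sqrt_nonneg _

lemma froNorm_le_alignErr₁ {I₁ I₂ I₃ R : ℕ} (L Ls : Tensor I₁ R I₃) (Rt Rs : Tensor I₂ R I₃)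
    (Sh Q Qi : Tensor R R I₃) :
    froNorm (RTPCA.tprod (RTPCA.tprod L Q - Ls) Sh) ≤ alignErr L Ls Rt Rs Sh Q Qi := by
  unfold alignErr
  calc froNorm (RTPCA.tprod (RTPCA.tprod L Q - Ls) Sh)
      = Real.sqrt (froNorm (RTPCA.tprod (RTPCA.tprod L Q - Ls) Sh) ^ 2) :=
        (Real.sqrt_sq (froNorm_nonneg _)).symm
    _ ≤ _ := Real.sqrt_le_sqrt (by nlinarith [sq_nonneg (froNorm (RTPCA.tprod (RTPCA.tprod Rt (tT Qi) - Rs) Sh))])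

lemma froNorm_le_alignErr₂ {I₁ I₂ I₃ R : ℕ} (L Ls : Tensor I₁ R I₃) (Rt Rs : Tensor I₂ R I₃)
    (Sh Q Qi : Tensor R R I₃) :
    froNorm (RTPCA.tprod (RTPCA.tprod Rt (tT Qi) - Rs) Sh) ≤ alignErr L Ls Rt Rs Sh Q Qi := by
  unfold alignErr
  calc froNorm (RTPCA.tprod (RTPCA.tprod Rt (tT Qi) - Rs) Sh)
      = Real.sqrt (froNorm (RTPCA.tprod (RTPCA.tprod Rt (tT Qi) - Rs) Sh) ^ 2) :=
        (Real.sqrt_sq (froNorm_nonneg _)).symm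
    _ ≤ _ := Real.sqrt_le_sqrt (by nlinarith [sq_nonneg (froNorm (RTPCA.tprod (RTPCA.tprod L Q - Ls) Sh))])

lemma apriori {I₁ I₂ I₃ R : ℕ} (hn : I₃ ≠ 0)
    (Us : Tensor I₁ R I₃) (Sig : Tensor R R I₃) (Vs : Tensor I₂ R I₃)
    (hU : RTPCA.tprod (tT Us) Us = idT R I₃) (hV : RTPCA.tprod (tT Vs) Vs = idT R I₃)
    (hD : FDiagPos Sig)
    (L : Tensor I₁ R I₃) (Rt : Tensor I₂ R I₃)
    (β : ℝ) (hσm : 0 < sigmaMin Sig) (hβσ : β < sigmaMin Sig) :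
    ∃ C : ℝ, 0 ≤ C ∧ ∀ Q Qi : Tensor R R I₃, TInv Q Qi →
      Real.sqrt I₃ * alignErr L (RTPCA.tprod Us (sqrtT Sig)) Rt (RTPCA.tprod Vs (sqrtT Sig))
        (sqrtT Sig) Q Qi ≤ β →
      (∀ i j t, |Q i j t| ≤ C) ∧ (∀ i j t, |Qi i j t| ≤ C) := by
  set σm := sigmaMin Sig with hσmdef
  set σM := sigmaMax Sig with hσMdef
  set CL := Real.sqrt (I₃ : ℝ) * froNorm L with hCL
  set CR := Real.sqrt (I₃ : ℝ) * froNorm Rt with hCRdef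
  have hCL0 : 0 ≤ CL := mul_nonneg (Real.sqrt_nonneg _) (froNorm_nonneg _)
  have hCR0 : 0 ≤ CR := mul_nonneg (Real.sqrt_nonneg _) (froNorm_nonneg _)
  have hden : 0 < σm - β := by linarith
  refine ⟨Real.sqrt σM * max CL CR / (σm - β), by positivity, ?_⟩
  intro Q Qi hT hA
  -- pointwise Fourier-domain bounds
  have key : ∀ m : Fin I₃, (∀ i j, Norm.norm (fSlice Q m i j) ≤ Real.sqrt σM * max CL CR / (σm - β))
      ∧ (∀ i j, Norm.norm (fSlice Qi m i j) ≤ Real.sqrt σM * max CL CR / (σm - β)) := by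
    intro m
    set d : Fin R → ℝ := fun i => (fSlice Sig m i i).re with hd
    have hdlo : ∀ i, σm ≤ d i := fun i => sigmaMin_le Sig m i
    have hdhi : ∀ i, d i ≤ σM := fun i => le_sigmaMax Sig m i
    have hShm : fSlice (sqrtT Sig) m = Matrix.diagonal (fun i => ((Real.sqrt (d i)) : ℂ)) :=
      fSlice_sqrtT_diag hn Sig hD m
    have hSigm : fSlice Sig m = Matrix.diagonal (fun i => ((d i : ℝ) : ℂ)) :=
      fSlice_sig_diag hn Sig hD m
    have hQQi : fSlice Q m * fSlice Qi m = 1 := by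
      rw [← fSlice_tprod hn, hT.1, fSlice_idT hn]
    have hUU : (fSlice Us m)ᴴ * fSlice Us m = 1 := by
      rw [← fSlice_tT hn, ← fSlice_tprod hn, hU, fSlice_idT hn]
    have hVV : (fSlice Vs m)ᴴ * fSlice Vs m = 1 := by
      rw [← fSlice_tT hn, ← fSlice_tprod hn, hV, fSlice_idT hn]
    -- first equation (L side)
    have heq1 : fSlice L m * fSlice Q m * Matrix.diagonal (fun i => ((Real.sqrt (d i)) : ℂ))
        = fSlice Us m * Matrix.diagonal (fun i => ((d i : ℝ) : ℂ))
          + fSlice (RTPCA.tprod (RTPCA.tprod L Q - RTPCA.tprod Us (sqrtT Sig)) (sqrtT Sig)) m := by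
      rw [fSlice_tprod hn, fSlice_sub, fSlice_tprod hn, fSlice_tprod hn]
      rw [Matrix.sub_mul, ← hShm, ← hSigm]
      rw [Matrix.mul_assoc (fSlice Us m), sqrt_diag_mul_self hn Sig hD m]
      abel
    have heq2 : fSlice Rt m * (fSlice Qi m)ᴴ * Matrix.diagonal (fun i => ((Real.sqrt (d i)) : ℂ))
        = fSlice Vs m * Matrix.diagonal (fun i => ((d i : ℝ) : ℂ))
          + fSlice (RTPCA.tprod (RTPCA.tprod Rt (tT Qi) - RTPCA.tprod Vs (sqrtT Sig)) (sqrtT Sig)) m := by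
      rw [fSlice_tprod hn, fSlice_sub, fSlice_tprod hn, fSlice_tprod hn, fSlice_tT hn]
      rw [Matrix.sub_mul, ← hShm, ← hSigm]
      rw [Matrix.mul_assoc (fSlice Vs m), sqrt_diag_mul_self hn Sig hD m]
      abel
    -- Frobenius bounds on the error slices
    have hfro1 : frobM (fSlice (RTPCA.tprod (RTPCA.tprod L Q - RTPCA.tprod Us (sqrtT Sig)) (sqrtT Sig)) m) ≤ β := by
      refine le_trans (frobM_fSlice_le hn _ m) (le_trans ?_ hA)
      exact mul_le_mul_of_nonneg_left (froNorm_le_alignErr₁ _ _ _ _ _ _ _) (Real.sqrt_nonneg _)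
    have hfro2 : frobM (fSlice (RTPCA.tprod (RTPCA.tprod Rt (tT Qi) - RTPCA.tprod Vs (sqrtT Sig)) (sqrtT Sig)) m) ≤ β := by
      refine le_trans (frobM_fSlice_le hn _ m) (le_trans ?_ hA)
      exact mul_le_mul_of_nonneg_left (froNorm_le_alignErr₂ _ _ _ _ _ _ _) (Real.sqrt_nonneg _)
    have hfL : frobM (fSlice L m) ≤ CL := frobM_fSlice_le hn L m
    have hfR : frobM (fSlice Rt m) ≤ CR := frobM_fSlice_le hn Rt m
    constructor
    · -- bound on Q entries via second equation
      have hQN2 : (fSlice Qi m)ᴴ * (fSlice Q m)ᴴ = 1 := by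
        rw [← Matrix.conjTranspose_mul, hQQi, Matrix.conjTranspose_one]
      have hb := inv_bound (fSlice Rt m) (fSlice Vs m) hVV d σm σM hσm hdlo hdhi
        ((fSlice Qi m)ᴴ) ((fSlice Q m)ᴴ) hQN2 _ β hfro2 hβσ heq2
      intro i j
      have h1 := hb j i
      rw [Matrix.conjTranspose_apply] at h1
      rw [show star (fSlice Q m i j) = (starRingEnd ℂ) (fSlice Q m i j) from rfl,
        Complex.norm_conj] at h1
      refine le_trans h1 ?_
      gcongr
      exact le_trans hfR (le_max_right _ _)
    · have hb := inv_bound (fSlice L m) (fSlice Us m) hUU d σm σM hσm hdlo hdhi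
        (fSlice Q m) (fSlice Qi m) hQQi _ β hfro1 hβσ heq1
      intro i j
      refine le_trans (hb i j) ?_
      gcongr
      exact le_trans hfL (le_max_left _ _)
  -- back to real entries
  have hI3 : (0:ℝ) < (I₃ : ℝ) := by
    exact_mod_cast Nat.pos_of_ne_zero hn
  have hCnn : 0 ≤ Real.sqrt σM * max CL CR / (σm - β) := by positivity
  constructor
  · intro i j t
    have h := entry_le_sum_dft hn Q i j t
    have h2 : ∑ m : Fin I₃, Norm.norm (dft Q i j m)
        ≤ (I₃ : ℝ) * (Real.sqrt σM * max CL CR / (σm - β)) := by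
      calc ∑ m : Fin I₃, Norm.norm (dft Q i j m)
          ≤ ∑ _m : Fin I₃, Real.sqrt σM * max CL CR / (σm - β) :=
            Finset.sum_le_sum fun m _ => (key m).1 i j
        _ = (I₃ : ℝ) * (Real.sqrt σM * max CL CR / (σm - β)) := by
            rw [Finset.sum_const, Finset.card_univ, Fintype.card_fin, nsmul_eq_mul]
    have := le_trans h h2
    exact le_of_mul_le_mul_left this hI3
  · intro i j t
    have h := entry_le_sum_dft hn Qi i j t
    have h2 : ∑ m : Fin I₃, Norm.norm (dft Qi i j m)
        ≤ (I₃ : ℝ) * (Real.sqrt σM * max CL CR / (σm - β)) := by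
      calc ∑ m : Fin I₃, Norm.norm (dft Qi i j m)
          ≤ ∑ _m : Fin I₃, Real.sqrt σM * max CL CR / (σm - β) :=
            Finset.sum_le_sum fun m _ => (key m).2 i j
        _ = (I₃ : ℝ) * (Real.sqrt σM * max CL CR / (σm - β)) := by
            rw [Finset.sum_const, Finset.card_univ, Fintype.card_fin, nsmul_eq_mul]
    have := le_trans h h2
    exact le_of_mul_le_mul_left this hI3

end APRIORI

section TOPO
variable {I₁ I₂ I₃ J R : ℕ}
open Complex Matrix RTPCA

lemma dft_ext (hn : I₃ ≠ 0) (A B : Tensor I₁ I₂ I₃)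
    (h : ∀ i j m, dft A i j m = dft B i j m) : A = B := by
  funext i j t
  have h1 := inv_formula hn A i j t
  have h2 := inv_formula hn B i j t
  have h3 : (I₃ : ℂ) * (A i j t : ℂ) = (I₃ : ℂ) * (B i j t : ℂ) := by
    rw [h1, h2]
    exact Finset.sum_congr rfl fun m _ => by rw [h i j m]
  have hc : ((A i j t : ℝ) : ℂ) = ((B i j t : ℝ) : ℂ) :=
    mul_left_cancel₀ (Nat.cast_ne_zero.mpr hn) h3
  exact_mod_cast hc

lemma tinv_idT (hn : I₃ ≠ 0) : TInv (idT R I₃) (idT R I₃) := by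
  have key : RTPCA.tprod (idT R I₃) (idT R I₃) = idT R I₃ := by
    apply dft_ext hn
    intro i j m
    rw [dft_tprod hn]
    simp only [dft_idT hn]
    simp [ite_mul, one_mul, zero_mul, Finset.sum_ite_eq]
  exact ⟨key, key⟩

-- continuity
lemma cont_coord1 (i j : Fin R) (k : Fin I₃) :
    Continuous fun p : Tensor R R I₃ × Tensor R R I₃ => p.1 i j k :=
  (continuous_apply k).comp ((continuous_apply j).comp ((continuous_apply i).comp continuous_fst))

lemma cont_coord2 (i j : Fin R) (k : Fin I₃) :
    Continuous fun p : Tensor R R I₃ × Tensor R R I₃ => p.2 i j k :=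
  (continuous_apply k).comp ((continuous_apply j).comp ((continuous_apply i).comp continuous_snd))

lemma cont_err1 (L Ls : Tensor I₁ R I₃) (Sh : Tensor R R I₃) (i : Fin I₁) (j : Fin R) (k : Fin I₃) :
    Continuous fun p : Tensor R R I₃ × Tensor R R I₃ =>
      RTPCA.tprod (RTPCA.tprod L p.1 - Ls) Sh i j k := by
  simp only [tprodApply, Pi.sub_apply]
  apply continuous_finset_sum
  intro l _
  apply continuous_finset_sum
  intro t _
  apply Continuous.mul _ continuous_const
  apply Continuous.sub _ continuous_const
  apply continuous_finset_sum
  intro l' _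
  apply continuous_finset_sum
  intro t' _
  exact continuous_const.mul (cont_coord1 _ _ _)

lemma cont_err2 (Rt Rs : Tensor I₂ R I₃) (Sh : Tensor R R I₃) (i : Fin I₂) (j : Fin R) (k : Fin I₃) :
    Continuous fun p : Tensor R R I₃ × Tensor R R I₃ =>
      RTPCA.tprod (RTPCA.tprod Rt (tT p.2) - Rs) Sh i j k := by
  simp only [tprodApply, Pi.sub_apply, tT]
  apply continuous_finset_sum
  intro l _
  apply continuous_finset_sum
  intro t _
  apply Continuous.mul _ continuous_const
  apply Continuous.sub _ continuous_const
  apply continuous_finset_sum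
  intro l' _
  apply continuous_finset_sum
  intro t' _
  exact continuous_const.mul (cont_coord2 _ _ _)

lemma cont_align (L Ls : Tensor I₁ R I₃) (Rt Rs : Tensor I₂ R I₃) (Sh : Tensor R R I₃) :
    Continuous fun p : Tensor R R I₃ × Tensor R R I₃ =>
      alignErr L Ls Rt Rs Sh p.1 p.2 := by
  unfold alignErr froNorm fro2
  apply Real.continuous_sqrt.comp
  apply Continuous.add
  · apply Continuous.pow
    apply Real.continuous_sqrt.comp
    apply continuous_finset_sum; intro i _
    apply continuous_finset_sum; intro j _
    apply continuous_finset_sum; intro k _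
    exact (cont_err1 L Ls Sh i j k).pow 2
  · apply Continuous.pow
    apply Real.continuous_sqrt.comp
    apply continuous_finset_sum; intro i _
    apply continuous_finset_sum; intro j _
    apply continuous_finset_sum; intro k _
    exact (cont_err2 Rt Rs Sh i j k).pow 2

lemma cont_tprod12 :
    Continuous fun p : Tensor R R I₃ × Tensor R R I₃ => RTPCA.tprod p.1 p.2 := by
  apply continuous_pi; intro i
  apply continuous_pi; intro j
  apply continuous_pi; intro k
  simp only [tprodApply]
  apply continuous_finset_sum; intro l _
  apply continuous_finset_sum; intro t _
  exact (cont_coord1 i l t).mul (cont_coord2 l j (k - t))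

end TOPO

section FINAL
open Complex Matrix RTPCA

lemma fro2_zero_of_deg {I₁ I₃ R : ℕ} (hdeg : I₃ = 0 ∨ R = 0) (A : Tensor I₁ R I₃) :
    fro2 A = 0 := by
  rcases hdeg with h0 | h0
  · subst h0
    simp [fro2]
  · subst h0
    simp [fro2]

lemma degenerate_opt {I₁ I₂ I₃ R : ℕ} (hdeg : I₃ = 0 ∨ R = 0)
    (L Ls : Tensor I₁ R I₃) (Rt Rs : Tensor I₂ R I₃) (Sh : Tensor R R I₃) :
    ∃ Q Qi : Tensor R R I₃, IsOptAlign L Ls Rt Rs Sh Q Qi := by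
  have hTI : TInv (idT R I₃) (idT R I₃) := by
    rcases hdeg with h0 | h0
    · subst h0
      constructor <;> · funext i j k; exact k.elim0
    · subst h0
      constructor <;> · funext i j k; exact i.elim0
  have hzero : ∀ Q Qi : Tensor R R I₃, alignErr L Ls Rt Rs Sh Q Qi = 0 := by
    intro Q Qi
    unfold alignErr froNorm
    rw [fro2_zero_of_deg hdeg (RTPCA.tprod (RTPCA.tprod L Q - Ls) Sh),
      fro2_zero_of_deg hdeg (RTPCA.tprod (RTPCA.tprod Rt (tT Qi) - Rs) Sh)]
    simp
  have hDlb : ∀ d ∈ {d : ℝ | ∃ Q Qi : Tensor R R I₃, TInv Q Qi ∧ d = alignErr L Ls Rt Rs Sh Q Qi}, (0:ℝ) ≤ d := by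
    rintro d ⟨Q, Qi, _, rfl⟩
    exact Real.sqrt_nonneg _
  have hD0 : distT L Ls Rt Rs Sh = 0 := by
    unfold distT
    apply le_antisymm
    · exact csInf_le ⟨0, fun d hd => hDlb d hd⟩ ⟨idT R I₃, idT R I₃, hTI, (hzero _ _).symm⟩
    · exact le_csInf ⟨_, ⟨idT R I₃, idT R I₃, hTI, rfl⟩⟩ hDlb
  exact ⟨idT R I₃, idT R I₃, hTI, by rw [hzero, hD0]⟩

lemma main_opt {I₁ I₂ I₃ R : ℕ} (hn : I₃ ≠ 0) (hR : R ≠ 0)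
    (Us : Tensor I₁ R I₃) (Sig : Tensor R R I₃) (Vs : Tensor I₂ R I₃)
    (hU : RTPCA.tprod (tT Us) Us = idT R I₃) (hV : RTPCA.tprod (tT Vs) Vs = idT R I₃)
    (hD : FDiagPos Sig)
    (L : Tensor I₁ R I₃) (Rt : Tensor I₂ R I₃)
    (ε : ℝ) (hε₀ : 0 < ε) (hε₁ : ε < 1)
    (hdist : distT L (RTPCA.tprod Us (sqrtT Sig)) Rt (RTPCA.tprod Vs (sqrtT Sig)) (sqrtT Sig)
      ≤ ε / Real.sqrt I₃ * sigmaMin Sig) :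
    ∃ Q Qi : Tensor R R I₃,
      IsOptAlign L (RTPCA.tprod Us (sqrtT Sig)) Rt (RTPCA.tprod Vs (sqrtT Sig)) (sqrtT Sig) Q Qi := by
  classical
  set Sh := sqrtT Sig with hSh
  set Ls := RTPCA.tprod Us Sh with hLs
  set Rs := RTPCA.tprod Vs Sh with hRs
  set D : Set ℝ :=
    {d : ℝ | ∃ Q Qi : Tensor R R I₃, TInv Q Qi ∧ d = alignErr L Ls Rt Rs Sh Q Qi} with hDset
  have hdistT : distT L Ls Rt Rs Sh = sInf D := rfl
  have hDlb : ∀ d ∈ D, (0:ℝ) ≤ d := by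
    rintro d ⟨Q, Qi, _, rfl⟩
    exact Real.sqrt_nonneg _
  have hDbdd : BddBelow D := ⟨0, fun d hd => hDlb d hd⟩
  have hDne : D.Nonempty := ⟨_, ⟨idT R I₃, idT R I₃, tinv_idT hn, rfl⟩⟩
  have hσm := sigmaMin_pos hn hR Sig hD
  have hsq : 0 < Real.sqrt (I₃:ℝ) := Real.sqrt_pos.mpr (by exact_mod_cast Nat.pos_of_ne_zero hn)
  set β := (1+ε)/2 * sigmaMin Sig with hβdef
  set b := β / Real.sqrt (I₃:ℝ) with hbdef
  have hβσ : β < sigmaMin Sig := by nlinarith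
  have hβ0 : 0 < β := by nlinarith
  have hdb : distT L Ls Rt Rs Sh < b := by
    refine lt_of_le_of_lt hdist ?_
    rw [hbdef, div_mul_eq_mul_div, hβdef]
    have hnum : ε * sigmaMin Sig < (1+ε)/2 * sigmaMin Sig := by nlinarith
    exact div_lt_div_of_pos_right hnum hsq
  obtain ⟨d₀, hd₀D, hd₀b⟩ := exists_lt_of_csInf_lt hDne (hdistT ▸ hdb)
  obtain ⟨C, hC0, hC⟩ := apriori hn Us Sig Vs hU hV hD L Rt β hσm hβσ
  set T : Set (Tensor R R I₃ × Tensor R R I₃) :=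
    {p | TInv p.1 p.2 ∧ alignErr L Ls Rt Rs Sh p.1 p.2 ≤ b} with hTdef
  have hmemβ : ∀ p ∈ T, Real.sqrt (I₃:ℝ) * alignErr L Ls Rt Rs Sh p.1 p.2 ≤ β := by
    intro p hp
    have h1 := mul_le_mul_of_nonneg_left hp.2 hsq.le
    have h2 : Real.sqrt (I₃:ℝ) * b = β := by
      rw [hbdef]
      field_simp
    rwa [h2] at h1
  have hTclosed : IsClosed T := by
    have e1 : IsClosed {p : Tensor R R I₃ × Tensor R R I₃ | RTPCA.tprod p.1 p.2 = idT R I₃} :=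
      isClosed_eq cont_tprod12 continuous_const
    have e2 : IsClosed {p : Tensor R R I₃ × Tensor R R I₃ | RTPCA.tprod p.2 p.1 = idT R I₃} := by
      have : Continuous fun p : Tensor R R I₃ × Tensor R R I₃ => RTPCA.tprod p.2 p.1 :=
        cont_tprod12.comp continuous_swap
      exact isClosed_eq this continuous_const
    have e3 : IsClosed {p : Tensor R R I₃ × Tensor R R I₃ |
        alignErr L Ls Rt Rs Sh p.1 p.2 ≤ b} :=
      isClosed_le (cont_align L Ls Rt Rs Sh) continuous_const
    have : T = ({p : Tensor R R I₃ × Tensor R R I₃ | RTPCA.tprod p.1 p.2 = idT R I₃}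
        ∩ {p | RTPCA.tprod p.2 p.1 = idT R I₃})
        ∩ {p | alignErr L Ls Rt Rs Sh p.1 p.2 ≤ b} := rfl
    rw [this]
    exact ((e1.inter e2).inter e3)
  have hTsub : T ⊆ Metric.closedBall 0 C := by
    intro p hp
    rw [mem_closedBall_zero_iff]
    obtain ⟨hQb, hQib⟩ := hC p.1 p.2 hp.1 (hmemβ p hp)
    rw [Prod.norm_def]
    apply max_le
    · rw [pi_norm_le_iff_of_nonneg hC0]; intro i
      rw [pi_norm_le_iff_of_nonneg hC0]; intro j
      rw [pi_norm_le_iff_of_nonneg hC0]; intro k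
      rw [Real.norm_eq_abs]; exact hQb i j k
    · rw [pi_norm_le_iff_of_nonneg hC0]; intro i
      rw [pi_norm_le_iff_of_nonneg hC0]; intro j
      rw [pi_norm_le_iff_of_nonneg hC0]; intro k
      rw [Real.norm_eq_abs]; exact hQib i j k
  have hTcompact : IsCompact T :=
    Metric.isCompact_of_isClosed_isBounded hTclosed (Metric.isBounded_closedBall.subset hTsub)
  have hTne : T.Nonempty := by
    obtain ⟨Q', Qi', hQ', hval⟩ := hd₀D
    exact ⟨(Q', Qi'), hQ', by rw [← hval]; exact le_of_lt hd₀b⟩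
  obtain ⟨p₀, hp₀, hmin⟩ := hTcompact.exists_isMinOn hTne
    (cont_align L Ls Rt Rs Sh).continuousOn
  have hminle : ∀ q ∈ T, alignErr L Ls Rt Rs Sh p₀.1 p₀.2 ≤ alignErr L Ls Rt Rs Sh q.1 q.2 :=
    fun q hq => hmin hq
  refine ⟨p₀.1, p₀.2, hp₀.1, ?_⟩
  rw [hdistT]
  apply le_antisymm
  · apply le_csInf hDne
    rintro d ⟨Q, Qi, hQ, rfl⟩
    by_cases hcase : alignErr L Ls Rt Rs Sh Q Qi ≤ b
    · exact hminle (Q, Qi) ⟨hQ, hcase⟩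
    · push_neg at hcase
      obtain ⟨Q', Qi', hQ', hval⟩ := hd₀D
      have h1 : alignErr L Ls Rt Rs Sh p₀.1 p₀.2 ≤ d₀ := by
        rw [hval]
        exact hminle (Q', Qi') ⟨hQ', by rw [← hval]; exact le_of_lt hd₀b⟩
      linarith
  · exact csInf_le hDbdd ⟨p₀.1, p₀.2, hp₀.1, rfl⟩

end FINAL


/-- existence of an invertible optimal alignment tensor. -/
theorem optimal_alignment_exists
    {I₁ I₂ I₃ R : ℕ}
    (Xs : Tensor I₁ I₂ I₃) (Us : Tensor I₁ R I₃) (Sig : Tensor R R I₃) (Vs : Tensor I₂ R I₃)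
    (hsvd : IsSkinnyTSVD Xs Us Sig Vs)
    (L : Tensor I₁ R I₃) (Rt : Tensor I₂ R I₃)
    (ε : ℝ) (hε₀ : 0 < ε) (hε₁ : ε < 1)
    (hdist : distT L (tprod Us (sqrtT Sig)) Rt (tprod Vs (sqrtT Sig)) (sqrtT Sig)
      ≤ ε / Real.sqrt I₃ * sigmaMin Sig) :
    ∃ Q Qi : Tensor R R I₃,
      IsOptAlign L (tprod Us (sqrtT Sig)) Rt (tprod Vs (sqrtT Sig)) (sqrtT Sig) Q Qi := by
  by_cases hdeg : I₃ = 0 ∨ R = 0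
  · exact degenerate_opt hdeg L _ Rt _ _
  · push_neg at hdeg
    exact main_opt hdeg.1 hdeg.2 Us Sig Vs hsvd.orthU hsvd.orthV hsvd.diag L Rt ε hε₀ hε₁ hdist
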